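/- Let g ∈ SL_d(R) with σ₁(g) > σ₂(g), and let τ be a probability measure on P(R^d) satisfying the Hölder regularity condition: there exist C, β > 0 with τ(B(W, R)) ≤ C·R^β for every R ≥ 0 and every projective hyperplane W. Then for any 0 < r ≤ 1/2, writing θ = τ(b(g⁻, r)^c), the decomposition g·τ = θ·g(τ restricted-normalized to b(g⁻,r)^c) + (1−θ)·g(τ restricted-normalized to b(g⁻,r)) satisfies θ ≤ C·r^β and diam(supp of g(τ restricted to b(g⁻,r))) ≤ diam B(g⁺, (σ₂(g)/σ₁(g))/r²). -/

import Mathlib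

/- STATEMENT 13: Let g ∈ SL_d(ℝ) with σ₁(g) > σ₂(g) (given via a Cartan
decomposition g = k' ∘ diag(a) ∘ k) and let τ be a probability measure on P(ℝ^d)
satisfying τ(B(W,R)) ≤ C·R^β for every R ≥ 0 and projective hyperplane W.  For
0 < r ≤ 1/2, writing θ = τ(b(g⁻,r)ᶜ), the r-attracting decomposition
g·τ = θ·g(τ_{b(g⁻,r)ᶜ}) + (1−θ)·g(τ_{b(g⁻,r)}) satisfies θ ≤ C·r^β and the support
of the attracting part has projective diameter at most diam B(g⁺, (σ₂/σ₁)/r²).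
P(ℝ^d) is modeled by the unit sphere of ℝ^d, with the projective metric `projDist`. -/

open MeasureTheory Metric
open scoped RealInnerProductSpace ENNReal
noncomputable section

/-- Projective distance `d(ℝv, ℝw) = ‖v ∧ w‖ / (‖v‖ ‖w‖)`. -/
def projDist {d : ℕ} (v w : EuclideanSpace ℝ (Fin d)) : ℝ :=
  Real.sqrt (‖v‖ ^ 2 * ‖w‖ ^ 2 - ⟪v, w⟫ ^ 2) / (‖v‖ * ‖w‖)

/-- Distance from the projective point `ℝv` to the projective hyperplane with
normal vector `u`. -/
def distToHyp {d : ℕ} (v u : EuclideanSpace ℝ (Fin d)) : ℝ :=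
  |⟪v, u⟫| / (‖v‖ * ‖u‖)

/-- The diagonal map with entries `a`. -/
def diagMap {d : ℕ} (a : Fin d → ℝ) (v : EuclideanSpace ℝ (Fin d)) :
    EuclideanSpace ℝ (Fin d) :=
  (WithLp.equiv 2 (Fin d → ℝ)).symm (fun i => a i * v i)

/-- The projective action of an invertible linear map on the unit sphere. -/
def pact {d : ℕ} (g : EuclideanSpace ℝ (Fin d) ≃ₗ[ℝ] EuclideanSpace ℝ (Fin d))
    (x : sphere (0 : EuclideanSpace ℝ (Fin d)) 1) :
    sphere (0 : EuclideanSpace ℝ (Fin d)) 1 :=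
  ⟨‖g (x : EuclideanSpace ℝ (Fin d))‖⁻¹ • g (x : EuclideanSpace ℝ (Fin d)), by
    have hx : ‖(x : EuclideanSpace ℝ (Fin d))‖ = 1 := mem_sphere_zero_iff_norm.mp x.2
    have hx0 : (x : EuclideanSpace ℝ (Fin d)) ≠ 0 := by
      intro h0; rw [h0, norm_zero] at hx; exact one_ne_zero hx.symm
    have hg0 : g (x : EuclideanSpace ℝ (Fin d)) ≠ 0 := by
      intro h0; exact hx0 (g.map_eq_zero_iff.mp h0)
    rw [mem_sphere_zero_iff_norm, norm_smul, norm_inv, norm_norm]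
    exact inv_mul_cancel₀ (norm_ne_zero_iff.mpr hg0)⟩

/-- The support of a measure: points all of whose open neighborhoods have
positive measure. -/
def msupp {α : Type*} [TopologicalSpace α] [MeasurableSpace α]
    (μ : Measure α) : Set α :=
  {x | ∀ U : Set α, IsOpen U → x ∈ U → 0 < μ U}

/-- Diameter of a set of projective points (unit vectors) with respect to the
projective distance. -/
def pdiam {d : ℕ} (S : Set (sphere (0 : EuclideanSpace ℝ (Fin d)) 1)) : ℝ :=
  sSup {t : ℝ | ∃ x ∈ S, ∃ y ∈ S,
    t = projDist (x : EuclideanSpace ℝ (Fin d)) (y : EuclideanSpace ℝ (Fin d))}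

lemma projDist_self {d : ℕ} (v : EuclideanSpace ℝ (Fin d)) : projDist v v = 0 := by
  have : ⟪v,v⟫ = ‖v‖^2 := real_inner_self_eq_norm_sq v
  rw [projDist, this]
  have h : ‖v‖ ^ 2 * ‖v‖ ^ 2 - (‖v‖ ^ 2) ^ 2 = 0 := by ring
  rw [h, Real.sqrt_zero, zero_div]

lemma projDist_le_one {d : ℕ} (v w : EuclideanSpace ℝ (Fin d)) (hv : ‖v‖ = 1) (hw : ‖w‖ = 1) :
    projDist v w ≤ 1 := by
  rw [projDist, hv, hw]
  simp only [one_pow, mul_one, one_mul, div_one]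
  calc Real.sqrt (1 - ⟪v,w⟫^2) ≤ Real.sqrt 1 := Real.sqrt_le_sqrt (by nlinarith [sq_nonneg ⟪v,w⟫])
  _ = 1 := Real.sqrt_one

lemma projDist_nonneg {d : ℕ} (v w : EuclideanSpace ℝ (Fin d)) : 0 ≤ projDist v w :=
  div_nonneg (Real.sqrt_nonneg _) (by positivity)

lemma projDist_smul {d : ℕ} (c : ℝ) (hc : 0 < c) (v w : EuclideanSpace ℝ (Fin d)) :
    projDist (c • v) w = projDist v w := by
  rw [projDist, projDist, norm_smul, real_inner_smul_left, Real.norm_eq_abs, abs_of_pos hc]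
  have h1 : (c*‖v‖)^2*‖w‖^2 - (c*⟪v,w⟫)^2 = c^2 * (‖v‖^2*‖w‖^2 - ⟪v,w⟫^2) := by ring
  rw [h1, Real.sqrt_mul (sq_nonneg c), Real.sqrt_sq hc.le, mul_assoc,
    mul_div_mul_left _ _ hc.ne']

lemma projDist_isometry {d : ℕ} (f : EuclideanSpace ℝ (Fin d) ≃ₗᵢ[ℝ] EuclideanSpace ℝ (Fin d))
    (v w : EuclideanSpace ℝ (Fin d)) : projDist (f v) (f w) = projDist v w := by
  rw [projDist, projDist, f.norm_map, f.norm_map, f.inner_map_map]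

lemma pact_continuous {d : ℕ} (g : EuclideanSpace ℝ (Fin d) ≃ₗ[ℝ] EuclideanSpace ℝ (Fin d)) :
    Continuous (pact g) := by
  have hg : Continuous fun v : EuclideanSpace ℝ (Fin d) => g v :=
    (g : EuclideanSpace ℝ (Fin d) →ₗ[ℝ] EuclideanSpace ℝ (Fin d)).continuous_of_finiteDimensional
  have h1 : Continuous fun x : sphere (0 : EuclideanSpace ℝ (Fin d)) 1 =>
      g (x : EuclideanSpace ℝ (Fin d)) := hg.comp continuous_subtype_val
  refine Continuous.subtype_mk ?_ _
  refine Continuous.smul (Continuous.inv₀ h1.norm ?_) h1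
  intro x
  have hx : ‖(x : EuclideanSpace ℝ (Fin d))‖ = 1 := mem_sphere_zero_iff_norm.mp x.2
  intro h0
  have : (x : EuclideanSpace ℝ (Fin d)) = 0 := g.map_eq_zero_iff.mp (norm_eq_zero.mp h0)
  rw [this, norm_zero] at hx; exact one_ne_zero hx.symm

lemma projDist_continuous {d : ℕ} (w : EuclideanSpace ℝ (Fin d)) (hw : ‖w‖ = 1) :
    Continuous fun x : sphere (0 : EuclideanSpace ℝ (Fin d)) 1 =>
      projDist (x : EuclideanSpace ℝ (Fin d)) w := by
  unfold projDist
  have hv : Continuous fun x : sphere (0 : EuclideanSpace ℝ (Fin d)) 1 =>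
      (x : EuclideanSpace ℝ (Fin d)) := continuous_subtype_val
  have hin : Continuous fun x : sphere (0 : EuclideanSpace ℝ (Fin d)) 1 =>
      ⟪(x : EuclideanSpace ℝ (Fin d)), w⟫ := hv.inner continuous_const
  refine Continuous.div ?_ (by fun_prop) ?_
  · exact (Real.continuous_sqrt.comp
      (((hv.norm.pow 2).mul continuous_const).sub (hin.pow 2)))
  · intro x
    have hx : ‖(x : EuclideanSpace ℝ (Fin d))‖ = 1 := mem_sphere_zero_iff_norm.mp x.2
    rw [hx, hw]; norm_num

lemma key_bound {d : ℕ} (hd : 1 < d) (a : Fin d → ℝ) (ha : ∀ i, 0 < a i)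
    (hmono : ∀ i j : Fin d, i ≤ j → a j ≤ a i)
    (r : ℝ) (hr0 : 0 < r) (hr1 : r ≤ 1)
    (y : EuclideanSpace ℝ (Fin d)) (hy : ‖y‖ = 1)
    (hy0 : r ≤ |y ⟨0, by omega⟩|) :
    projDist (diagMap a y) (EuclideanSpace.single (⟨0, by omega⟩ : Fin d) 1)
      ≤ (a ⟨1, by omega⟩ / a ⟨0, by omega⟩) / r ^ 2 := by
  set i0 : Fin d := ⟨0, by omega⟩
  set i1 : Fin d := ⟨1, by omega⟩
  set w : EuclideanSpace ℝ (Fin d) := diagMap a y with hw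
  have hwi : ∀ i, w i = a i * y i := fun i => rfl
  have he : ‖EuclideanSpace.single i0 (1:ℝ)‖ = 1 := by simp
  have hinner : ⟪w, EuclideanSpace.single i0 (1:ℝ)⟫ = a i0 * y i0 := by
    rw [EuclideanSpace.inner_single_right]; simp [hwi]
  have hwsq : ‖w‖ ^ 2 = ∑ i, (a i * y i) ^ 2 := by
    rw [PiLp.norm_sq_eq_of_L2]
    exact Finset.sum_congr rfl fun i _ => by rw [hwi, Real.norm_eq_abs, sq_abs]
  have hysq : ∑ i, y i ^ 2 = 1 := by
    have h2 : ‖y‖ ^ 2 = ∑ i, y i ^ 2 := by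
      rw [PiLp.norm_sq_eq_of_L2]
      exact Finset.sum_congr rfl fun i _ => by rw [Real.norm_eq_abs, sq_abs]
    rw [hy] at h2; simpa using h2.symm
  -- numerator bound
  have hnum : ‖w‖ ^ 2 - (a i0 * y i0) ^ 2 ≤ (a i1) ^ 2 := by
    have hsplit : ∑ i ∈ Finset.univ.erase i0, (a i * y i) ^ 2 + (a i0 * y i0) ^ 2
        = ∑ i, (a i * y i) ^ 2 :=
      Finset.sum_erase_add _ _ (Finset.mem_univ i0)
    have hbd : ∑ i ∈ Finset.univ.erase i0, (a i * y i) ^ 2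
        ≤ ∑ i ∈ Finset.univ.erase i0, (a i1) ^ 2 * y i ^ 2 := by
      refine Finset.sum_le_sum fun i hi => ?_
      have hne : i ≠ i0 := Finset.ne_of_mem_erase hi
      have h1i : i1 ≤ i := by
        have : (0:ℕ) < i.val := Nat.pos_of_ne_zero (fun h => hne (Fin.ext h))
        exact Fin.mk_le_of_le_val this
      have hai : a i ≤ a i1 := hmono i1 i h1i
      have : (a i * y i) ^ 2 = a i ^ 2 * y i ^ 2 := by ring
      rw [this]
      exact mul_le_mul_of_nonneg_right (pow_le_pow_left₀ (ha i).le hai 2) (sq_nonneg _)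
    have hbd2 : ∑ i ∈ Finset.univ.erase i0, (a i1) ^ 2 * y i ^ 2 ≤ (a i1) ^ 2 := by
      rw [← Finset.mul_sum]
      have h1 : ∑ i ∈ Finset.univ.erase i0, y i ^ 2 ≤ ∑ i, y i ^ 2 :=
        Finset.sum_le_sum_of_subset_of_nonneg (Finset.subset_univ _)
          (fun i _ _ => sq_nonneg _)
      rw [hysq] at h1
      calc (a i1)^2 * ∑ i ∈ Finset.univ.erase i0, y i ^ 2 ≤ (a i1)^2 * 1 :=
        mul_le_mul_of_nonneg_left h1 (sq_nonneg _)
      _ = (a i1)^2 := mul_one _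
    rw [hwsq, ← hsplit]
    linarith
  -- denominator bound
  have hden : a i0 * r ≤ ‖w‖ := by
    have h1 : (a i0 * y i0) ^ 2 ≤ ‖w‖ ^ 2 := by
      rw [hwsq]
      exact Finset.single_le_sum (f := fun i => (a i * y i)^2)
        (fun i _ => sq_nonneg _) (Finset.mem_univ i0)
    have h2 : |a i0 * y i0| ≤ ‖w‖ := by
      rw [← Real.sqrt_sq_eq_abs, ← Real.sqrt_sq (norm_nonneg w)]
      exact Real.sqrt_le_sqrt h1
    have h3 : a i0 * r ≤ |a i0 * y i0| := by
      rw [abs_mul, abs_of_pos (ha i0)]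
      exact mul_le_mul_of_nonneg_left hy0 (ha i0).le
    linarith
  -- conclude
  have hpos : 0 < a i0 * r := mul_pos (ha i0) hr0
  have hsqrt : Real.sqrt (‖w‖ ^ 2 * 1 ^ 2 - (a i0 * y i0) ^ 2) ≤ a i1 := by
    calc Real.sqrt (‖w‖^2 * 1^2 - (a i0 * y i0)^2)
        ≤ Real.sqrt ((a i1)^2) := Real.sqrt_le_sqrt (by nlinarith)
      _ = a i1 := Real.sqrt_sq (ha i1).le
  calc projDist w (EuclideanSpace.single i0 (1:ℝ))
      ≤ a i1 / (a i0 * r) := by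
        rw [projDist, he, hinner, mul_one]
        exact div_le_div₀ (ha i1).le hsqrt hpos hden
    _ ≤ (a i1 / a i0) / r ^ 2 := by
        rw [div_div]
        have hrr : r ^ 2 ≤ r := by nlinarith
        have h1 : a i0 * r ^ 2 ≤ a i0 * r := mul_le_mul_of_nonneg_left hrr (ha i0).le
        exact div_le_div_of_nonneg_left (ha i1).le (mul_pos (ha i0) (by positivity)) h1

lemma pdiam_mono {d : ℕ} {A B : Set (sphere (0 : EuclideanSpace ℝ (Fin d)) 1)}
    (hAB : A ⊆ B) (hB : B.Nonempty) : pdiam A ≤ pdiam B := by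
  set tA := {t : ℝ | ∃ x ∈ A, ∃ y ∈ A,
    t = projDist (x : EuclideanSpace ℝ (Fin d)) (y : EuclideanSpace ℝ (Fin d))}
  set tB := {t : ℝ | ∃ x ∈ B, ∃ y ∈ B,
    t = projDist (x : EuclideanSpace ℝ (Fin d)) (y : EuclideanSpace ℝ (Fin d))}
  have hbdd : BddAbove tB := by
    refine ⟨1, fun t ht => ?_⟩
    obtain ⟨x, -, y, -, rfl⟩ := ht
    exact projDist_le_one _ _ (mem_sphere_zero_iff_norm.mp x.2)
      (mem_sphere_zero_iff_norm.mp y.2)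
  have hsub : tA ⊆ tB := fun t ht => by
    obtain ⟨x, hx, y, hy, rfl⟩ := ht
    exact ⟨x, hAB hx, y, hAB hy, rfl⟩
  rcases Set.eq_empty_or_nonempty tA with hA | hA
  · rw [pdiam, show {t : ℝ | ∃ x ∈ A, ∃ y ∈ A,
      t = projDist (x : EuclideanSpace ℝ (Fin d)) (y : EuclideanSpace ℝ (Fin d))} = tA from rfl,
      hA, Real.sSup_empty]
    obtain ⟨b, hb⟩ := hB
    have h0 : (0:ℝ) ∈ tB := ⟨b, hb, b, hb, (projDist_self _).symm⟩
    exact le_csSup hbdd h0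
  · exact csSup_le_csSup hbdd hA hsub

theorem attracting_decomposition_of_pair
    {d : ℕ} (hd : 2 ≤ d)
    (g : EuclideanSpace ℝ (Fin d) ≃ₗ[ℝ] EuclideanSpace ℝ (Fin d))
    (k k' : EuclideanSpace ℝ (Fin d) ≃ₗᵢ[ℝ] EuclideanSpace ℝ (Fin d))
    (a : Fin d → ℝ) (ha : ∀ i, 0 < a i)
    (hmono : ∀ i j : Fin d, i ≤ j → a j ≤ a i)
    -- `σ₁(g) > σ₂(g)`
    (hgap : a ⟨1, by omega⟩ < a ⟨0, by omega⟩)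
    (hg : ∀ v, g v = k' (diagMap a (k v)))
    (τ : Measure (sphere (0 : EuclideanSpace ℝ (Fin d)) 1)) [IsProbabilityMeasure τ]
    (C β : ℝ) (hC : 0 < C) (hβ : 0 < β)
    -- Hölder regularity: `τ(B(W,R)) ≤ C R^β` for every projective hyperplane `W`
    (hHolder : ∀ u : EuclideanSpace ℝ (Fin d), ‖u‖ = 1 → ∀ R : ℝ, 0 ≤ R →
      τ {x | distToHyp x.1 u ≤ R} ≤ ENNReal.ofReal (C * R ^ β))
    (r : ℝ) (hr0 : 0 < r) (hr : r ≤ 1 / 2) :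
    -- `θ = τ(b(g⁻,r)ᶜ) ≤ C r^β`
    τ {x | distToHyp x.1
          (k.symm (EuclideanSpace.single (⟨0, by omega⟩ : Fin d) 1)) ≤ r}
        ≤ ENNReal.ofReal (C * r ^ β) ∧
      -- the pushforward by `g` of the normalized restriction of `τ` to `b(g⁻,r)`
      -- is supported on a set of projective diameter at most
      -- `diam B(g⁺, (σ₂(g)/σ₁(g))/r²)`
      pdiam (msupp
          ((τ {x | r < distToHyp x.1
              (k.symm (EuclideanSpace.single (⟨0, by omega⟩ : Fin d) 1))})⁻¹ •
            Measure.map (pact g)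
              (τ.restrict {x | r < distToHyp x.1
                (k.symm (EuclideanSpace.single (⟨0, by omega⟩ : Fin d) 1))})))
        ≤ pdiam {x | projDist x.1
            (k' (EuclideanSpace.single (⟨0, by omega⟩ : Fin d) 1))
              ≤ (a ⟨1, by omega⟩ / a ⟨0, by omega⟩) / r ^ 2} := by
  have hd0 : (⟨0, by omega⟩ : Fin d) = ⟨0, by omega⟩ := rfl
  set i0 : Fin d := ⟨0, by omega⟩ with hi0
  set i1 : Fin d := ⟨1, by omega⟩ with hi1
  set e₀ : EuclideanSpace ℝ (Fin d) := EuclideanSpace.single i0 1 with he₀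
  set u : EuclideanSpace ℝ (Fin d) := k.symm e₀ with hu
  have hue : ‖e₀‖ = 1 := by simp [he₀]
  have hun : ‖u‖ = 1 := by rw [hu, k.symm.norm_map]; exact hue
  set M : ℝ := (a i1 / a i0) / r ^ 2 with hM
  have hM0 : 0 ≤ M := by
    apply div_nonneg (div_nonneg (ha i1).le (ha i0).le) (by positivity)
  set S : Set (sphere (0 : EuclideanSpace ℝ (Fin d)) 1) :=
    {x | r < distToHyp x.1 u} with hS
  set V : EuclideanSpace ℝ (Fin d) := k' e₀ with hV
  have hVn : ‖V‖ = 1 := by rw [hV, k'.norm_map]; exact hue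
  set T : Set (sphere (0 : EuclideanSpace ℝ (Fin d)) 1) :=
    {x | projDist x.1 V ≤ M} with hT
  have hTclosed : IsClosed T := by
    have : T = (fun x : sphere (0 : EuclideanSpace ℝ (Fin d)) 1 =>
        projDist x.1 V) ⁻¹' Set.Iic M := rfl
    rw [this]
    exact IsClosed.preimage (projDist_continuous V hVn) isClosed_Iic
  -- the geometric mapping statement
  have hmap : ∀ x ∈ S, pact g x ∈ T := by
    intro x hx
    have hxn : ‖(x : EuclideanSpace ℝ (Fin d))‖ = 1 := mem_sphere_zero_iff_norm.mp x.2
    have hx0 : (x : EuclideanSpace ℝ (Fin d)) ≠ 0 := by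
      intro h0; rw [h0, norm_zero] at hxn; exact one_ne_zero hxn.symm
    have hg0 : g (x : EuclideanSpace ℝ (Fin d)) ≠ 0 := by
      intro h0; exact hx0 (g.map_eq_zero_iff.mp h0)
    set y : EuclideanSpace ℝ (Fin d) := k x.1 with hy
    have hyn : ‖y‖ = 1 := by rw [hy, k.norm_map]; exact hxn
    have hinn : ⟪(x : EuclideanSpace ℝ (Fin d)), u⟫ = y i0 := by
      have h1 : ⟪k x.1, k u⟫ = ⟪(x : EuclideanSpace ℝ (Fin d)), u⟫ := k.inner_map_map _ _
      have h2 : k u = e₀ := by rw [hu]; exact k.apply_symm_apply e₀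
      rw [← h1, h2, he₀, EuclideanSpace.inner_single_right]
      simp [hy]
    have hyr : r ≤ |y i0| := by
      have := hx
      rw [hS, Set.mem_setOf_eq, distToHyp, hxn, hun, one_mul, div_one, hinn] at this
      exact this.le
    have hgx : g (x : EuclideanSpace ℝ (Fin d)) = k' (diagMap a y) := by
      rw [hg, hy]
    have hpe : ((pact g x : sphere (0 : EuclideanSpace ℝ (Fin d)) 1) :
        EuclideanSpace ℝ (Fin d)) =
        ‖g (x : EuclideanSpace ℝ (Fin d))‖⁻¹ • g (x : EuclideanSpace ℝ (Fin d)) := rfl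
    have hcpos : 0 < ‖g (x : EuclideanSpace ℝ (Fin d))‖⁻¹ :=
      inv_pos.mpr (norm_pos_iff.mpr hg0)
    rw [hT, Set.mem_setOf_eq, hpe, projDist_smul _ hcpos, hgx, hV, projDist_isometry]
    exact key_bound hd a ha hmono r hr0 (by linarith) y hyn hyr
  constructor
  · exact hHolder u hun r hr0.le
  · -- support of the attracting part lies in T
    have hsupp : msupp ((τ S)⁻¹ • Measure.map (pact g) (τ.restrict S)) ⊆ T := by
      intro x hx
      by_contra hxT
      have hopen : IsOpen Tᶜ := hTclosed.isOpen_compl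
      have hpos := hx Tᶜ hopen hxT
      have hmeas : MeasurableSet Tᶜ := hTclosed.measurableSet.compl
      have hzero : Measure.map (pact g) (τ.restrict S) Tᶜ = 0 := by
        rw [Measure.map_apply (pact_continuous g).measurable hmeas,
          Measure.restrict_apply (hmeas.preimage (pact_continuous g).measurable)]
        have : pact g ⁻¹' Tᶜ ∩ S = ∅ := by
          ext z
          simp only [Set.mem_inter_iff, Set.mem_preimage, Set.mem_compl_iff,
            Set.mem_empty_iff_false, iff_false, not_and]
          intro hz hzS
          exact hz (hmap z hzS)
        rw [this, measure_empty]
      rw [Measure.smul_apply, hzero, smul_zero] at hpos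
      exact lt_irrefl 0 hpos
    refine pdiam_mono hsupp ?_
    refine ⟨⟨V, ?_⟩, ?_⟩
    · rw [mem_sphere_zero_iff_norm]; exact hVn
    · rw [hT, Set.mem_setOf_eq]
      exact le_of_eq_of_le (projDist_self V) hM0
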